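/- Let γ₁ = e^{135} − e^{146} − e^{236} − e^{245}, γ₂ = e^{136} + e^{145} + e^{235} − e^{246}, σ = e^{127} + e^{347} + e^{567}, and let φ = a·γ₁ + b·γ₂ + c·σ for real numbers a, b, c. Then φ(e₂,e₃,e₅) + φ(e₁,e₄,e₅) + φ(e₁,e₃,e₆) = 3b and φ(e₁,e₄,e₆) + φ(e₂,e₃,e₆) + φ(e₂,e₄,e₅) = −3a. Consequently, if both of these sums vanish, then φ = c·σ and φ is not definite: indeed (ι_{e₁}φ) ∧ (ι_{e₁}φ) = 0. -/

import Mathlib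

open AlternatingMap
open scoped TensorProduct

/-- `ℝ⁷`. -/
abbrev V7 : Type := Fin 7 → ℝ

/-- Wedge product of real-valued alternating forms on `V7`. -/
noncomputable def wedge {m n : ℕ} (φ : V7 [⋀^Fin m]→ₗ[ℝ] ℝ) (ψ : V7 [⋀^Fin n]→ₗ[ℝ] ℝ) :
    V7 [⋀^Fin (m + n)]→ₗ[ℝ] ℝ :=
  ((TensorProduct.lid ℝ ℝ).toLinearMap.compAlternatingMap (φ.domCoprod ψ)).domDomCongr
    finSumFinEquiv

/-- The dual basis covector `eⁱ` (1-indexed: `i = 1, …, 7`) as a 1-form on `ℝ⁷`. -/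
noncomputable def eF (i : ℕ) : V7 [⋀^Fin 1]→ₗ[ℝ] ℝ :=
  AlternatingMap.ofSubsingleton ℝ V7 ℝ (0 : Fin 1) (LinearMap.proj (Fin.ofNat 7 (i - 1)))

/-- `e^{ij} := eⁱ ∧ eʲ` (1-indexed). -/
noncomputable def eW2 (i j : ℕ) : V7 [⋀^Fin 2]→ₗ[ℝ] ℝ := wedge (eF i) (eF j)

/-- `e^{ijk} := eⁱ ∧ eʲ ∧ eᵏ` (1-indexed). -/
noncomputable def eW3 (i j k : ℕ) : V7 [⋀^Fin 3]→ₗ[ℝ] ℝ := wedge (wedge (eF i) (eF j)) (eF k)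

/-- The volume form `e^{1234567} = e¹∧e²∧e³∧e⁴∧e⁵∧e⁶∧e⁷`. -/
noncomputable def vol7 : V7 [⋀^Fin 7]→ₗ[ℝ] ℝ :=
  wedge (wedge (wedge (wedge (wedge (wedge (eF 1) (eF 2)) (eF 3)) (eF 4)) (eF 5)) (eF 6)) (eF 7)

/-- The standard basis vector `eᵢ` of `ℝ⁷` (1-indexed: `i = 1, …, 7`). -/
noncomputable def bV (i : ℕ) : V7 := Pi.single (Fin.ofNat 7 (i - 1)) 1

/-- Interior product `ι_v φ` of a vector with a 3-form: `(x, y) ↦ φ (v, x, y)`. -/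
noncomputable def iprod (v : V7) (φ : V7 [⋀^Fin 3]→ₗ[ℝ] ℝ) : V7 [⋀^Fin 2]→ₗ[ℝ] ℝ :=
  φ.curryLeft v

/-- The 7-form `(ι_v φ) ∧ (ι_v φ) ∧ φ`. -/
noncomputable def G2vol (v : V7) (φ : V7 [⋀^Fin 3]→ₗ[ℝ] ℝ) : V7 [⋀^Fin 7]→ₗ[ℝ] ℝ :=
  wedge (wedge (iprod v φ) (iprod v φ)) φ

/-- A 3-form on `ℝ⁷` is definite if `(ι_vφ)∧(ι_vφ)∧φ ≠ 0` for every nonzero `v`. -/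
def IsDefinite (φ : V7 [⋀^Fin 3]→ₗ[ℝ] ℝ) : Prop :=
  ∀ v : V7, v ≠ 0 → G2vol v φ ≠ 0


open Equiv in
lemma lemA {m n : ℕ} (a : V7 [⋀^Fin m]→ₗ[ℝ] ℝ) (b : V7 [⋀^Fin n]→ₗ[ℝ] ℝ)
    (v : Fin (m+n) → V7) :
    (m.factorial * n.factorial : ℝ) * wedge a b v
      = ∑ ρ : Perm (Fin (m+n)), (Perm.sign ρ : ℤ) *
          ((a fun i => v (ρ (finSumFinEquiv (Sum.inl i)))) *
           (b fun i => v (ρ (finSumFinEquiv (Sum.inr i))))) := by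
  set w : Fin m ⊕ Fin n → V7 := fun i => v (finSumFinEquiv i) with hwdef
  have key := congrArg (fun F : V7 [⋀^Fin m ⊕ Fin n]→ₗ[ℝ] (ℝ ⊗[ℝ] ℝ) => F w)
    (MultilinearMap.domCoprod_alternization_eq a b)
  simp only [MultilinearMap.alternatization_apply, MultilinearMap.domDomCongr_apply,
    MultilinearMap.domCoprod_apply, coe_multilinearMap, AlternatingMap.smul_apply,
    Fintype.card_fin] at key
  have key2 := congrArg (TensorProduct.lid ℝ ℝ).toLinearMap key
  simp only [map_sum, map_nsmul, Units.smul_def, map_zsmul, TensorProduct.lid_tmul,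
    smul_eq_mul] at key2
  simp only [zsmul_eq_mul, nsmul_eq_mul, Nat.cast_mul] at key2
  have hw : (wedge a b) v
      = (TensorProduct.lid ℝ ℝ).toLinearMap ((a.domCoprod b) w) := rfl
  rw [hw, ← key2]
  refine Fintype.sum_equiv (Equiv.permCongr finSumFinEquiv)
    (fun x : Perm (Fin m ⊕ Fin n) => ((Perm.sign x : ℤ) : ℝ) *
      ((a fun i => w (x (Sum.inl i))) * (b fun i => w (x (Sum.inr i)))))
    (fun ρ : Perm (Fin (m+n)) => ((Perm.sign ρ : ℤ) : ℝ) *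
      ((a fun i => v (ρ (finSumFinEquiv (Sum.inl i)))) *
       (b fun i => v (ρ (finSumFinEquiv (Sum.inr i)))))) (fun σ => ?_)
  simp only [hwdef, Equiv.permCongr_apply, Equiv.symm_apply_apply,
    Equiv.Perm.sign_permCongr]

open Equiv in
lemma sum_perm_succ {n : ℕ} (G : Perm (Fin (n+1)) → ℝ) :
    ∑ ρ : Perm (Fin (n+1)), G ρ
      = ∑ p : Fin (n+1), ∑ τ : Perm (Fin n), G (Equiv.Perm.decomposeFin.symm (p, τ)) := by
  have h1 : ∑ ρ : Perm (Fin (n+1)), G ρ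
      = ∑ x : Fin (n+1) × Perm (Fin n), G (Equiv.Perm.decomposeFin.symm x) :=
    Fintype.sum_equiv Equiv.Perm.decomposeFin G
      (fun x : Fin (n+1) × Perm (Fin n) => G (Equiv.Perm.decomposeFin.symm x)) (fun ρ => by simp)
  rw [h1, Fintype.sum_prod_type]

open Equiv in
lemma sum_perm_one (G : Perm (Fin 1) → ℝ) : ∑ ρ : Perm (Fin 1), G ρ = G 1 := by
  haveI : Subsingleton (Perm (Fin 1)) := ⟨fun a b => Equiv.ext fun x => Subsingleton.elim _ _⟩
  exact Fintype.sum_subsingleton _ 1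

lemma eF_apply (i : ℕ) (w : Fin 1 → V7) : eF i w = w 0 (Fin.ofNat 7 (i - 1)) := rfl

lemma eW2_apply' (i j : ℕ) (v : Fin 2 → V7) :
    wedge (eF i) (eF j) v = v 0 (Fin.ofNat 7 (i - 1)) * v 1 (Fin.ofNat 7 (j - 1))
      - v 1 (Fin.ofNat 7 (i - 1)) * v 0 (Fin.ofNat 7 (j - 1)) := by
  have h := lemA (eF i) (eF j) v
  rw [sum_perm_succ] at h
  simp only [sum_perm_one, Fin.sum_univ_succ, Finset.sum_empty, Fin.sum_univ_zero,
    Equiv.Perm.decomposeFin.symm_sign, Equiv.Perm.decomposeFin_symm_apply_zero,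
    Equiv.Perm.decomposeFin_symm_apply_one, Equiv.Perm.decomposeFin_symm_apply_succ,
    Equiv.Perm.decomposeFin_symm_of_one,
    Equiv.Perm.sign_one, finSumFinEquiv_apply_left, finSumFinEquiv_apply_right,
    eF_apply, Equiv.Perm.one_apply, Equiv.swap_apply_left, Equiv.swap_apply_right,
    Equiv.swap_self, Equiv.refl_apply,
    show Fin.castAdd 1 (0:Fin 1) = 0 from rfl, show Fin.natAdd 1 (0:Fin 1) = 1 from rfl] at h
  norm_num at h
  rw [sub_eq_add_neg]
  exact h

lemma d3_two (p : Fin 3) (e : Equiv.Perm (Fin 2)) :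
    Equiv.Perm.decomposeFin.symm (p, e) 2 = Equiv.swap 0 p ((e 1).succ) :=
  Equiv.Perm.decomposeFin_symm_apply_succ e p 1

lemma eW3_apply (i j k : ℕ) (v : Fin 3 → V7) :
    eW3 i j k v
      = v 0 (Fin.ofNat 7 (i-1)) * v 1 (Fin.ofNat 7 (j-1)) * v 2 (Fin.ofNat 7 (k-1))
      - v 0 (Fin.ofNat 7 (i-1)) * v 2 (Fin.ofNat 7 (j-1)) * v 1 (Fin.ofNat 7 (k-1))
      - v 1 (Fin.ofNat 7 (i-1)) * v 0 (Fin.ofNat 7 (j-1)) * v 2 (Fin.ofNat 7 (k-1))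
      + v 1 (Fin.ofNat 7 (i-1)) * v 2 (Fin.ofNat 7 (j-1)) * v 0 (Fin.ofNat 7 (k-1))
      + v 2 (Fin.ofNat 7 (i-1)) * v 0 (Fin.ofNat 7 (j-1)) * v 1 (Fin.ofNat 7 (k-1))
      - v 2 (Fin.ofNat 7 (i-1)) * v 1 (Fin.ofNat 7 (j-1)) * v 0 (Fin.ofNat 7 (k-1)) := by
  have h := lemA (wedge (eF i) (eF j)) (eF k) v
  rw [sum_perm_succ] at h
  simp only [sum_perm_succ, sum_perm_one, Fin.sum_univ_succ, Fin.sum_univ_zero,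
    Equiv.Perm.decomposeFin.symm_sign, Equiv.Perm.decomposeFin_symm_apply_zero,
    Equiv.Perm.decomposeFin_symm_apply_one,
    Equiv.Perm.decomposeFin_symm_of_one, Equiv.Perm.sign_one,
    finSumFinEquiv_apply_left, finSumFinEquiv_apply_right,
    eF_apply, Equiv.Perm.one_apply,
    show Fin.castAdd 1 (0:Fin 2) = (0:Fin 3) from rfl,
    show Fin.castAdd 1 (1:Fin 2) = (1:Fin 3) from rfl,
    show Fin.natAdd 2 (0:Fin 1) = (2:Fin 3) from rfl,
    show (0:Fin 1).succ = 1 from rfl, show (0:Fin 2).succ = 1 from rfl,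
    show (1:Fin 2).succ = 2 from rfl] at h
  norm_num [eW2_apply',
    show Fin.castAdd 1 (0:Fin 2) = (0:Fin 3) from rfl,
    show Fin.castAdd 1 (1:Fin 2) = (1:Fin 3) from rfl] at h
  rw [d3_two, d3_two, d3_two] at h
  norm_num [Equiv.swap_apply_def, Fin.ext_iff,
    show (0:Fin 2).succ = 1 from rfl, show (1:Fin 2).succ = 2 from rfl] at h
  show wedge (wedge (eF i) (eF j)) (eF k) v = _
  linear_combination h / 2

lemma wedge_zero_left {m n : ℕ} (b : V7 [⋀^Fin n]→ₗ[ℝ] ℝ) :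
    wedge (0 : V7 [⋀^Fin m]→ₗ[ℝ] ℝ) b = 0 := by
  ext v
  have h := lemA (0 : V7 [⋀^Fin m]→ₗ[ℝ] ℝ) b v
  simp only [AlternatingMap.zero_apply, zero_mul, mul_zero, Finset.sum_const_zero] at h
  have hfac : ((m.factorial * n.factorial : ℕ) : ℝ) ≠ 0 := by positivity
  have := mul_eq_zero.mp (by push_cast at h ⊢; linarith [h] :
    (((m.factorial * n.factorial : ℕ)) : ℝ) * wedge (0 : V7 [⋀^Fin m]→ₗ[ℝ] ℝ) b v = 0)
  simp only [AlternatingMap.zero_apply]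
  tauto

lemma d4_two (p : Fin 4) (e : Equiv.Perm (Fin 3)) :
    Equiv.Perm.decomposeFin.symm (p, e) 2 = Equiv.swap 0 p ((e 1).succ) :=
  Equiv.Perm.decomposeFin_symm_apply_succ e p 1

lemma d4_three (p : Fin 4) (e : Equiv.Perm (Fin 3)) :
    Equiv.Perm.decomposeFin.symm (p, e) 3 = Equiv.swap 0 p ((e 2).succ) :=
  Equiv.Perm.decomposeFin_symm_apply_succ e p 2

lemma iprod_apply (u : V7) (φ : V7 [⋀^Fin 3]→ₗ[ℝ] ℝ) (w : Fin 2 → V7) :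
    iprod u φ w = φ (Matrix.vecCons u w) := rfl

lemma f_apply (c : ℝ) (w : Fin 2 → V7) :
    iprod (bV 1) (c • (eW3 1 2 7 + eW3 3 4 7 + eW3 5 6 7)) w
      = c * (w 0 (1 : Fin 7) * w 1 (6 : Fin 7) - w 1 (1 : Fin 7) * w 0 (6 : Fin 7)) := by
  rw [iprod_apply]
  simp only [AlternatingMap.smul_apply, AlternatingMap.add_apply, eW3_apply, smul_eq_mul,
    Matrix.cons_val_zero, Matrix.cons_val_one, Matrix.vecHead,
    show ∀ (x : V7) (u : Fin 2 → V7), Matrix.vecCons x u 2 = u 1 from fun x u => rfl]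
  norm_num (config := { decide := true }) [bV, Pi.single_apply, Fin.ext_iff, Fin.val_natCast, Fin.val_ofNat, Fin.ofNat_eq_cast, Nat.cast_one]
  left; rfl

set_option maxHeartbeats 4000000 in
set_option maxRecDepth 100000 in
lemma key4 (c : ℝ) :
    wedge (iprod (bV 1) (c • (eW3 1 2 7 + eW3 3 4 7 + eW3 5 6 7)))
          (iprod (bV 1) (c • (eW3 1 2 7 + eW3 3 4 7 + eW3 5 6 7))) = 0 := by
  ext v
  have h := lemA (iprod (bV 1) (c • (eW3 1 2 7 + eW3 3 4 7 + eW3 5 6 7)))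
    (iprod (bV 1) (c • (eW3 1 2 7 + eW3 3 4 7 + eW3 5 6 7))) v
  rw [sum_perm_succ] at h
  simp only [sum_perm_succ, sum_perm_one, Fin.sum_univ_succ, Fin.sum_univ_zero,
    Equiv.Perm.decomposeFin.symm_sign, Equiv.Perm.decomposeFin_symm_apply_zero,
    Equiv.Perm.decomposeFin_symm_apply_one,
    Equiv.Perm.decomposeFin_symm_of_one, Equiv.Perm.sign_one,
    finSumFinEquiv_apply_left, finSumFinEquiv_apply_right,
    Equiv.Perm.one_apply, f_apply,
    show Fin.castAdd 2 (0:Fin 2) = (0:Fin 4) from rfl,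
    show Fin.castAdd 2 (1:Fin 2) = (1:Fin 4) from rfl,
    show Fin.natAdd 2 (0:Fin 2) = (2:Fin 4) from rfl,
    show Fin.natAdd 2 (1:Fin 2) = (3:Fin 4) from rfl] at h
  norm_num at h
  repeat rw [d4_two] at h
  repeat rw [d4_three] at h
  repeat rw [d3_two] at h
  norm_num (config := { decide := true }) [Equiv.swap_apply_def, Fin.ext_iff,
    show (0:Fin 2).succ = 1 from rfl, show (0:Fin 3).succ = 1 from rfl,
    show (1:Fin 2).succ = 2 from rfl, show (1:Fin 3).succ = 2 from rfl,
    show (2:Fin 3).succ = 3 from rfl] at h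
  simp only [smul_add, AlternatingMap.zero_apply]
  ring_nf at h
  linarith [h]


lemma ev1 (a b c : ℝ) :
    (a • (eW3 1 3 5 - eW3 1 4 6 - eW3 2 3 6 - eW3 2 4 5)
      + b • (eW3 1 3 6 + eW3 1 4 5 + eW3 2 3 5 - eW3 2 4 6)
      + c • (eW3 1 2 7 + eW3 3 4 7 + eW3 5 6 7)) ![bV 2, bV 3, bV 5] = b := by
  simp only [AlternatingMap.smul_apply, AlternatingMap.add_apply, AlternatingMap.sub_apply, eW3_apply, smul_eq_mul,
    Matrix.cons_val_zero, Matrix.cons_val_one, Matrix.vecHead,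
    show ∀ (x : V7) (u : Fin 2 → V7), Matrix.vecCons x u 2 = u 1 from fun x u => rfl]
  norm_num (config := { decide := true }) [bV, Pi.single_apply, Fin.ext_iff, Fin.val_natCast, Fin.val_ofNat]

lemma ev2 (a b c : ℝ) :
    (a • (eW3 1 3 5 - eW3 1 4 6 - eW3 2 3 6 - eW3 2 4 5)
      + b • (eW3 1 3 6 + eW3 1 4 5 + eW3 2 3 5 - eW3 2 4 6)
      + c • (eW3 1 2 7 + eW3 3 4 7 + eW3 5 6 7)) ![bV 1, bV 4, bV 5] = b := by
  simp only [AlternatingMap.smul_apply, AlternatingMap.add_apply, AlternatingMap.sub_apply, eW3_apply, smul_eq_mul,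
    Matrix.cons_val_zero, Matrix.cons_val_one, Matrix.vecHead,
    show ∀ (x : V7) (u : Fin 2 → V7), Matrix.vecCons x u 2 = u 1 from fun x u => rfl]
  norm_num (config := { decide := true }) [bV, Pi.single_apply, Fin.ext_iff, Fin.val_natCast, Fin.val_ofNat]

lemma ev3 (a b c : ℝ) :
    (a • (eW3 1 3 5 - eW3 1 4 6 - eW3 2 3 6 - eW3 2 4 5)
      + b • (eW3 1 3 6 + eW3 1 4 5 + eW3 2 3 5 - eW3 2 4 6)
      + c • (eW3 1 2 7 + eW3 3 4 7 + eW3 5 6 7)) ![bV 1, bV 3, bV 6] = b := by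
  simp only [AlternatingMap.smul_apply, AlternatingMap.add_apply, AlternatingMap.sub_apply, eW3_apply, smul_eq_mul,
    Matrix.cons_val_zero, Matrix.cons_val_one, Matrix.vecHead,
    show ∀ (x : V7) (u : Fin 2 → V7), Matrix.vecCons x u 2 = u 1 from fun x u => rfl]
  norm_num (config := { decide := true }) [bV, Pi.single_apply, Fin.ext_iff, Fin.val_natCast, Fin.val_ofNat]

lemma ev4 (a b c : ℝ) :
    (a • (eW3 1 3 5 - eW3 1 4 6 - eW3 2 3 6 - eW3 2 4 5)
      + b • (eW3 1 3 6 + eW3 1 4 5 + eW3 2 3 5 - eW3 2 4 6)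
      + c • (eW3 1 2 7 + eW3 3 4 7 + eW3 5 6 7)) ![bV 1, bV 4, bV 6] = -a := by
  simp only [AlternatingMap.smul_apply, AlternatingMap.add_apply, AlternatingMap.sub_apply, eW3_apply, smul_eq_mul,
    Matrix.cons_val_zero, Matrix.cons_val_one, Matrix.vecHead,
    show ∀ (x : V7) (u : Fin 2 → V7), Matrix.vecCons x u 2 = u 1 from fun x u => rfl]
  norm_num (config := { decide := true }) [bV, Pi.single_apply, Fin.ext_iff, Fin.val_natCast, Fin.val_ofNat]

lemma ev5 (a b c : ℝ) :
    (a • (eW3 1 3 5 - eW3 1 4 6 - eW3 2 3 6 - eW3 2 4 5)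
      + b • (eW3 1 3 6 + eW3 1 4 5 + eW3 2 3 5 - eW3 2 4 6)
      + c • (eW3 1 2 7 + eW3 3 4 7 + eW3 5 6 7)) ![bV 2, bV 3, bV 6] = -a := by
  simp only [AlternatingMap.smul_apply, AlternatingMap.add_apply, AlternatingMap.sub_apply, eW3_apply, smul_eq_mul,
    Matrix.cons_val_zero, Matrix.cons_val_one, Matrix.vecHead,
    show ∀ (x : V7) (u : Fin 2 → V7), Matrix.vecCons x u 2 = u 1 from fun x u => rfl]
  norm_num (config := { decide := true }) [bV, Pi.single_apply, Fin.ext_iff, Fin.val_natCast, Fin.val_ofNat]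

lemma ev6 (a b c : ℝ) :
    (a • (eW3 1 3 5 - eW3 1 4 6 - eW3 2 3 6 - eW3 2 4 5)
      + b • (eW3 1 3 6 + eW3 1 4 5 + eW3 2 3 5 - eW3 2 4 6)
      + c • (eW3 1 2 7 + eW3 3 4 7 + eW3 5 6 7)) ![bV 2, bV 4, bV 5] = -a := by
  simp only [AlternatingMap.smul_apply, AlternatingMap.add_apply, AlternatingMap.sub_apply, eW3_apply, smul_eq_mul,
    Matrix.cons_val_zero, Matrix.cons_val_one, Matrix.vecHead,
    show ∀ (x : V7) (u : Fin 2 → V7), Matrix.vecCons x u 2 = u 1 from fun x u => rfl]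
  norm_num (config := { decide := true }) [bV, Pi.single_apply, Fin.ext_iff, Fin.val_natCast, Fin.val_ofNat]
/-- Evaluations of `φ = a·γ₁ + b·γ₂ + c·σ` and the consequence that if the two displayed
sums vanish then `φ = c·σ` and `φ` is not definite, since `(ι_{e₁}φ)∧(ι_{e₁}φ) = 0`. -/
theorem stmt7 (a b c : ℝ) :
    let γ₁ := eW3 1 3 5 - eW3 1 4 6 - eW3 2 3 6 - eW3 2 4 5
    let γ₂ := eW3 1 3 6 + eW3 1 4 5 + eW3 2 3 5 - eW3 2 4 6
    let σ := eW3 1 2 7 + eW3 3 4 7 + eW3 5 6 7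
    let φ := a • γ₁ + b • γ₂ + c • σ
    (φ ![bV 2, bV 3, bV 5] + φ ![bV 1, bV 4, bV 5] + φ ![bV 1, bV 3, bV 6] = 3 * b) ∧
    (φ ![bV 1, bV 4, bV 6] + φ ![bV 2, bV 3, bV 6] + φ ![bV 2, bV 4, bV 5] = -(3 * a)) ∧
    ((φ ![bV 2, bV 3, bV 5] + φ ![bV 1, bV 4, bV 5] + φ ![bV 1, bV 3, bV 6] = 0 ∧
      φ ![bV 1, bV 4, bV 6] + φ ![bV 2, bV 3, bV 6] + φ ![bV 2, bV 4, bV 5] = 0) →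
      φ = c • σ ∧ wedge (iprod (bV 1) φ) (iprod (bV 1) φ) = 0 ∧ ¬ IsDefinite φ) := by
  intro γ₁ γ₂ σ φ
  have hγ₁ : γ₁ = eW3 1 3 5 - eW3 1 4 6 - eW3 2 3 6 - eW3 2 4 5 := rfl
  have hγ₂ : γ₂ = eW3 1 3 6 + eW3 1 4 5 + eW3 2 3 5 - eW3 2 4 6 := rfl
  have hσ : σ = eW3 1 2 7 + eW3 3 4 7 + eW3 5 6 7 := rfl
  have hφd : φ = a • γ₁ + b • γ₂ + c • σ := rfl
  have e1 : φ ![bV 2, bV 3, bV 5] = b := by rw [hφd, hγ₁, hγ₂, hσ]; exact ev1 a b c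
  have e2 : φ ![bV 1, bV 4, bV 5] = b := by rw [hφd, hγ₁, hγ₂, hσ]; exact ev2 a b c
  have e3 : φ ![bV 1, bV 3, bV 6] = b := by rw [hφd, hγ₁, hγ₂, hσ]; exact ev3 a b c
  have e4 : φ ![bV 1, bV 4, bV 6] = -a := by rw [hφd, hγ₁, hγ₂, hσ]; exact ev4 a b c
  have e5 : φ ![bV 2, bV 3, bV 6] = -a := by rw [hφd, hγ₁, hγ₂, hσ]; exact ev5 a b c
  have e6 : φ ![bV 2, bV 4, bV 5] = -a := by rw [hφd, hγ₁, hγ₂, hσ]; exact ev6 a b c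
  refine ⟨by rw [e1, e2, e3]; ring, by rw [e4, e5, e6]; ring, fun ⟨hs1, hs2⟩ => ?_⟩
  rw [e1, e2, e3] at hs1
  rw [e4, e5, e6] at hs2
  have hb0 : b = 0 := by linarith
  have ha0 : a = 0 := by linarith
  have hφ : φ = c • σ := by
    rw [hφd, ha0, hb0]
    simp
  have h4 : wedge (iprod (bV 1) φ) (iprod (bV 1) φ) = 0 := by
    rw [hφ, hσ]
    exact key4 c
  refine ⟨hφ, h4, fun hdef => ?_⟩
  have hv : (bV 1 : V7) ≠ 0 := by
    intro h0
    have := congrFun h0 ((0 : Fin 7))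
    norm_num (config := { decide := true }) [bV, Pi.single_apply] at this
  have hG : G2vol (bV 1) φ = 0 := by
    show wedge (wedge (iprod (bV 1) φ) (iprod (bV 1) φ)) φ = 0
    rw [h4, wedge_zero_left]
  exact hdef (bV 1) hv hG
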